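/- In ℤ[x_1,…,x_n], for any 1 ≤ k ≤ n and any a ≥ 0, the identity Σ_{ℓ=0}^{n−k} e_ℓ(x_{k+1},…,x_n) · c(n, n−k−ℓ+a) = c(k, a) holds, where c(k,a) := Σ_{ℓ=1}^{k} (−1)^{a+k+ℓ} h_{a+ℓ−k}(x_ℓ,…,x_k) viewed as the coefficient relation obtained from ω_k^a = Σ e_ℓ(x_{k+1},…,x_n) ω_n^{n−k−ℓ+a}; concretely, for each 1 ≤ j ≤ n: Σ_{ℓ=0}^{n−k} e_ℓ(x_{k+1},…,x_n) (−1)^{a−k−ℓ+j} h_{a−k−ℓ+j}(x_j,…,x_n) = (−1)^{a+k+j} h_{a+j−k}(x_j,…,x_k) when j ≤ k, and = 0 when j > k. -/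

import Mathlib

open MvPolynomial

/-- Complete homogeneous symmetric polynomial of degree `d` in the variables `x_i`, `i ∈ s`. -/
noncomputable def hpoly (s : Finset ℕ) (d : ℕ) : MvPolynomial ℕ ℤ :=
  ∑ m ∈ s.sym d, (m.1.map X).prod

/-- Elementary symmetric polynomial of degree `d` in the variables `x_i`, `i ∈ s`. -/
noncomputable def epoly (s : Finset ℕ) (d : ℕ) : MvPolynomial ℕ ℤ :=
  ∑ t ∈ s.powersetCard d, ∏ i ∈ t, X i

namespace SchurAux

abbrev R := MvPolynomial ℕ ℤ

lemma epoly_zero (s : Finset ℕ) : epoly s 0 = 1 := by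
  simp [epoly]

lemma epoly_eq_zero {s : Finset ℕ} {d : ℕ} (h : s.card < d) : epoly s d = 0 := by
  simp [epoly, Finset.powersetCard_eq_empty.2 h]

lemma epoly_insert {y : ℕ} {s : Finset ℕ} (h : y ∉ s) (d : ℕ) :
    epoly (insert y s) (d + 1) = epoly s (d + 1) + X y * epoly s d := by
  classical
  rw [epoly, Finset.powersetCard_succ_insert h, Finset.sum_union]
  · congr 1
    rw [Finset.sum_image, epoly, Finset.mul_sum]
    · apply Finset.sum_congr rfl
      intro t ht
      have hyt : y ∉ t := fun hy => h ((Finset.mem_powersetCard.1 ht).1 hy)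
      rw [Finset.prod_insert hyt]
    · intro t ht u hu he
      have hyt : y ∉ t := fun hy => h ((Finset.mem_powersetCard.1 ht).1 hy)
      have hyu : y ∉ u := fun hy => h ((Finset.mem_powersetCard.1 hu).1 hy)
      rw [← Finset.erase_insert hyt, ← Finset.erase_insert hyu, he]
  · rw [Finset.disjoint_right]
    intro t ht ht'
    rw [Finset.mem_image] at ht
    obtain ⟨u, hu, rfl⟩ := ht
    exact h ((Finset.mem_powersetCard.1 ht').1 (Finset.mem_insert_self y u))

lemma hpoly_empty (d : ℕ) : hpoly ∅ d = if d = 0 then 1 else 0 := by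
  cases d with
  | zero => simp [hpoly]; rfl
  | succ d => simp [hpoly]

lemma hpoly_insert {y : ℕ} {s : Finset ℕ} (h : y ∉ s) (d : ℕ) :
    hpoly (insert y s) d = ∑ i ∈ Finset.range (d + 1), (X y : R) ^ i * hpoly s (d - i) := by
  classical
  have e1 : ∑ p : (Σ i : Fin (d + 1), {x // x ∈ s.sym (d - (i : ℕ))}),
        ((X y : R) ^ (p.1 : ℕ) * ((((p.2 : Sym ℕ (d - (p.1 : ℕ)))) : Multiset ℕ).map X).prod)
      = ∑ m : {x // x ∈ (insert y s).sym d}, (((m : Sym ℕ d) : Multiset ℕ).map X).prod := by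
    apply Fintype.sum_equiv ((Finset.symInsertEquiv h).symm)
    intro p
    rw [Finset.symInsertEquiv_symm_apply_coe, Sym.coe_fill]
    rw [Multiset.map_add, Multiset.prod_add, Sym.coe_replicate, Multiset.map_replicate,
      Multiset.prod_replicate, mul_comm]
  rw [hpoly, ← Finset.sum_coe_sort]
  refine e1.symm.trans ?_
  rw [← Finset.univ_sigma_univ, Finset.sum_sigma,
    Finset.sum_range (fun i => (X y : R) ^ i * hpoly s (d - i))]
  apply Finset.sum_congr rfl
  intro i _
  rw [hpoly, Finset.mul_sum, ← Finset.sum_coe_sort (s.sym (d - (i : ℕ)))]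
  rfl

noncomputable def ef (i : ℕ) : PowerSeries R :=
  PowerSeries.mk fun n => if n = 0 then 1 else if n = 1 then -(X i) else 0

noncomputable def hf (i : ℕ) : PowerSeries R := PowerSeries.mk fun n => (X i) ^ n

lemma term_split (x : R) (g : ℕ → R) (p : ℕ) :
    (if p = 0 then 1 else if p = 1 then -x else 0) * g p
      = (if p = 0 then g 0 else 0) + (if p = 1 then -x * g 1 else 0) := by
  rcases p with _ | _ | p <;> simp

lemma sum_coeff_ef (x : R) (g : ℕ → R) (n : ℕ) :
    ∑ p ∈ Finset.range (n + 1), (if p = 0 then 1 else if p = 1 then -x else 0) * g p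
      = g 0 + (if 1 ∈ Finset.range (n + 1) then -x * g 1 else 0) := by
  simp_rw [term_split]
  rw [Finset.sum_add_distrib, Finset.sum_ite_eq' (Finset.range (n + 1)) 0,
    Finset.sum_ite_eq' (Finset.range (n + 1)) 1]
  simp

lemma coeff_ef_prod (s : Finset ℕ) (n : ℕ) :
    PowerSeries.coeff n (∏ i ∈ s, ef i) = (-1) ^ n * epoly s n := by
  classical
  induction s using Finset.induction_on generalizing n with
  | empty =>
    rw [Finset.prod_empty, PowerSeries.coeff_one]
    cases n with
    | zero => simp [epoly_zero]
    | succ n => simp [epoly_eq_zero (show (∅ : Finset ℕ).card < n + 1 by simp)]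
  | @insert a s h ih =>
    rw [Finset.prod_insert h, PowerSeries.coeff_mul,
      Finset.Nat.sum_antidiagonal_eq_sum_range_succ_mk]
    simp only [ih]
    simp only [ef, PowerSeries.coeff_mk]
    rw [sum_coeff_ef (X a) (fun q => (-1) ^ (n - q) * epoly s (n - q)) n]
    cases n with
    | zero => simp [epoly_zero]
    | succ n =>
      rw [if_pos (by simp), epoly_insert h]
      norm_num
      ring_nf

lemma coeff_hf_prod (s : Finset ℕ) (n : ℕ) :
    PowerSeries.coeff n (∏ i ∈ s, hf i) = hpoly s n := by
  classical
  induction s using Finset.induction_on generalizing n with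
  | empty =>
    rw [Finset.prod_empty, PowerSeries.coeff_one, hpoly_empty]
  | @insert a s h ih =>
    rw [Finset.prod_insert h, PowerSeries.coeff_mul,
      Finset.Nat.sum_antidiagonal_eq_sum_range_succ_mk, hpoly_insert h]
    apply Finset.sum_congr rfl
    intro p _
    rw [ih]
    simp [hf]

lemma ef_mul_hf (i : ℕ) : ef i * hf i = 1 := by
  ext n
  rw [PowerSeries.coeff_mul, Finset.Nat.sum_antidiagonal_eq_sum_range_succ_mk]
  simp only [ef, hf, PowerSeries.coeff_mk]
  rw [sum_coeff_ef (X i) (fun q => (X i : R) ^ (n - q)) n]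
  cases n with
  | zero => simp
  | succ n =>
    rw [if_pos (by simp), PowerSeries.coeff_one]
    simp only [Nat.succ_ne_zero, if_false, Nat.succ_sub_one, Nat.sub_zero]
    rw [pow_succ]
    ring_nf

lemma prod_ef_mul_prod_hf (s : Finset ℕ) :
    (∏ i ∈ s, ef i) * (∏ i ∈ s, hf i) = 1 := by
  rw [← Finset.prod_mul_distrib]
  exact Finset.prod_eq_one fun i _ => ef_mul_hf i

end SchurAux

open SchurAux

/-- Coefficientwise form of `ω_k^a = Σ_{ℓ=0}^{n−k} e_ℓ(x_{k+1},…,x_n) ω_n^{n−k−ℓ+a}`: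
for each `1 ≤ j ≤ n`,
`Σ_{ℓ=0}^{n−k} e_ℓ(x_{k+1},…,x_n)·(−1)^{a−k−ℓ+j}·h_{a−k−ℓ+j}(x_j,…,x_n)`
equals `(−1)^{a+k+j}·h_{a+j−k}(x_j,…,x_k)` if `j ≤ k` and `0` if `j > k`
(terms with negative `h`-degree are zero; signs are written with the same parity). -/
theorem schur_coefficient_identity (n k a j : ℕ)
    (hk : 1 ≤ k) (hkn : k ≤ n) (hj : 1 ≤ j) (hjn : j ≤ n) :
    (∑ l ∈ Finset.range (n - k + 1),
      if k + l ≤ a + j then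
        epoly (Finset.Icc (k + 1) n) l * (-1 : MvPolynomial ℕ ℤ) ^ (a + j + k + l) *
          hpoly (Finset.Icc j n) (a + j - k - l)
      else 0)
    = if j ≤ k ∧ k ≤ a + j then
        (-1 : MvPolynomial ℕ ℤ) ^ (a + k + j) * hpoly (Finset.Icc j k) (a + j - k)
      else 0 := by
  classical
  by_cases hka : k ≤ a + j
  swap
  · rw [if_neg (fun hc => hka hc.2)]
    apply Finset.sum_eq_zero
    intro l _
    rw [if_neg (by omega)]
  have hm : a + k + j = (a + j - k) + 2 * k := by omega
  set S := Finset.Icc (k + 1) n with hSdef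
  set U := Finset.Icc j n with hUdef
  set m := a + j - k with hmdef
  have key : ∀ l, (if k + l ≤ a + j then
        epoly S l * (-1 : R) ^ (a + j + k + l) * hpoly U (m - l) else 0)
      = (-1 : R) ^ m * (if l ≤ m then (-1 : R) ^ l * (epoly S l * hpoly U (m - l)) else 0) := by
    intro l
    by_cases hl : l ≤ m
    · rw [if_pos (by omega), if_pos hl,
        show a + j + k + l = m + 2 * k + l from by omega,
        pow_add, pow_add, pow_mul, neg_one_sq, one_pow]
      ring
    · rw [if_neg (by omega), if_neg hl, mul_zero]
  rw [Finset.sum_congr rfl (fun l _ => key l), ← Finset.mul_sum]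
  have hcard : S.card = n - k := by rw [hSdef, Nat.card_Icc]; omega
  have hsum : (∑ l ∈ Finset.range (n - k + 1),
        if l ≤ m then (-1 : R) ^ l * (epoly S l * hpoly U (m - l)) else 0)
      = PowerSeries.coeff m ((∏ i ∈ S, ef i) * (∏ i ∈ U, hf i)) := by
    rw [PowerSeries.coeff_mul, Finset.Nat.sum_antidiagonal_eq_sum_range_succ_mk]
    have hterm : ∀ p, PowerSeries.coeff p (∏ i ∈ S, ef i) *
          PowerSeries.coeff (m - p) (∏ i ∈ U, hf i)
        = (-1 : R) ^ p * (epoly S p * hpoly U (m - p)) := by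
      intro p
      rw [coeff_ef_prod, coeff_hf_prod]
      ring
    rw [Finset.sum_congr rfl (fun p _ => hterm p)]
    have e1 : (∑ l ∈ Finset.range (n - k + 1),
          if l ≤ m then (-1 : R) ^ l * (epoly S l * hpoly U (m - l)) else 0)
        = ∑ l ∈ Finset.range (max (n - k) m + 1),
            if l ≤ m then (-1 : R) ^ l * (epoly S l * hpoly U (m - l)) else 0 := by
      apply Finset.sum_subset (Finset.range_subset_range.2 (by omega))
      intro l _ hl
      rw [Finset.mem_range, not_lt] at hl
      have hz : epoly S l = 0 := epoly_eq_zero (by rw [hcard]; omega)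
      split <;> simp [hz]
    have e2 : (∑ l ∈ Finset.range (m + 1), (-1 : R) ^ l * (epoly S l * hpoly U (m - l)))
        = ∑ l ∈ Finset.range (max (n - k) m + 1),
            if l ≤ m then (-1 : R) ^ l * (epoly S l * hpoly U (m - l)) else 0 := by
      have e2a : ∀ l ∈ Finset.range (m + 1),
          (-1 : R) ^ l * (epoly S l * hpoly U (m - l))
            = if l ≤ m then (-1 : R) ^ l * (epoly S l * hpoly U (m - l)) else 0 := by
        intro l hl
        rw [Finset.mem_range] at hl
        rw [if_pos (by omega)]
      rw [Finset.sum_congr rfl e2a]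
      apply Finset.sum_subset (Finset.range_subset_range.2 (by omega))
      intro l _ hl
      rw [Finset.mem_range, not_lt] at hl
      rw [if_neg (by omega)]
    rw [e1, e2]
  rw [hsum]
  by_cases hjk : j ≤ k
  · rw [if_pos ⟨hjk, hka⟩]
    have hsplit : U = Finset.Icc j k ∪ S := by
      ext x
      simp only [hUdef, hSdef, Finset.mem_Icc, Finset.mem_union]
      omega
    have hdisj : Disjoint (Finset.Icc j k) S := by
      rw [Finset.disjoint_left]
      intro x hx hx'
      rw [Finset.mem_Icc] at hx
      rw [hSdef, Finset.mem_Icc] at hx'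
      omega
    rw [hsplit, Finset.prod_union hdisj, mul_left_comm, prod_ef_mul_prod_hf, mul_one,
      coeff_hf_prod, hm, pow_add, pow_mul, neg_one_sq, one_pow, mul_one]
  · rw [if_neg (fun hc => hjk hc.1)]
    have hsplit : S = Finset.Icc (k + 1) (j - 1) ∪ U := by
      ext x
      simp only [hUdef, hSdef, Finset.mem_Icc, Finset.mem_union]
      omega
    have hdisj : Disjoint (Finset.Icc (k + 1) (j - 1)) U := by
      rw [Finset.disjoint_left]
      intro x hx hx'
      rw [Finset.mem_Icc] at hx
      rw [hUdef, Finset.mem_Icc] at hx'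
      omega
    rw [hsplit, Finset.prod_union hdisj, mul_assoc, prod_ef_mul_prod_hf, mul_one,
      coeff_ef_prod, epoly_eq_zero (show (Finset.Icc (k + 1) (j - 1)).card < m by
        rw [Nat.card_Icc]; omega), mul_zero, mul_zero]
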